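/- arXiv:2512.24417 — 2 statements merged into one kernel-verified Lean document; each statement's English description precedes it below -/
import Mathlib

section
/- A finitely additive probability measure on a Boolean algebra B is equivalent to a natural family of probability distributions: giving a function m : B → [0,1] with m(⊤) = 1 and m(a ⊔ b) = m(a) + m(b) whenever a ⊓ b = ⊥ is equivalent to giving, for each n and each n-tuple (b₁,…,b_n) of pairwise disjoint elements with b₁ ⊔ ⋯ ⊔ b_n = ⊤, an element of I(n) (a probability vector), compatibly with all maps of finite index sets. -/
/-- A finitely additive probability measure on a Boolean algebra `B`. -/
structure FinAddProb (B : Type*) [BooleanAlgebra B] where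
  m : B → ℝ
  nonneg : ∀ a, 0 ≤ m a
  le_one : ∀ a, m a ≤ 1
  top : m ⊤ = 1
  add : ∀ a b : B, a ⊓ b = ⊥ → m (a ⊔ b) = m a + m b

/-- An `n`-partition of unity in `B`: pairwise disjoint elements with supremum `⊤`. -/
def IsPartition {B : Type*} [BooleanAlgebra B] {n : ℕ} (p : Fin n → B) : Prop :=
  (∀ i j, i ≠ j → p i ⊓ p j = ⊥) ∧ Finset.univ.sup p = ⊤

/-- Pushforward of a partition along a map of finite index sets. -/
noncomputable def pushPart {B : Type*} [BooleanAlgebra B] {m n : ℕ}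
    (f : Fin m → Fin n) (p : Fin m → B) : Fin n → B :=
  fun i => (Finset.univ.filter (fun j => f j = i)).sup p

/-- The action of `f : Fin m → Fin n` on probability vectors. -/
noncomputable def Iact {m n : ℕ} (f : Fin m → Fin n) (φ : Fin m → ℝ) : Fin n → ℝ :=
  fun i => ∑ j ∈ Finset.univ.filter (fun j => f j = i), φ j

/-- A natural family of probability vectors indexed by partitions of unity of `B`. -/
structure NatFamily (B : Type*) [BooleanAlgebra B] where
  vec : ∀ (n : ℕ) (p : Fin n → B), IsPartition p → Fin n → ℝ
  nonneg : ∀ n p hp i, 0 ≤ vec n p hp i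
  sum_one : ∀ n p hp, ∑ i, vec n p hp i = 1
  natural : ∀ (m n : ℕ) (f : Fin m → Fin n) (p : Fin m → B) (hp : IsPartition p)
    (hq : IsPartition (pushPart f p)),
    vec n (pushPart f p) hq = Iact f (vec m p hp)

section Aux

variable {B : Type*} [BooleanAlgebra B]

lemma FinAddProb.m_bot (μ : FinAddProb B) : μ.m ⊥ = 0 := by
  have := μ.add ⊥ ⊥ (by simp)
  simp only [sup_idem] at this
  linarith

lemma sup_sum (μ : FinAddProb B) {n : ℕ} (p : Fin n → B)
    (h : ∀ i j, i ≠ j → p i ⊓ p j = ⊥) (s : Finset (Fin n)) :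
    μ.m (s.sup p) = ∑ i ∈ s, μ.m (p i) := by
  induction s using Finset.induction with
  | empty => simp [μ.m_bot]
  | @insert a s ha ih =>
    rw [Finset.sup_insert, Finset.sum_insert ha, ← ih, μ.add]
    rw [Finset.sup_inf_distrib_left]
    apply (Finset.sup_eq_bot_iff _ _).2
    intro i hi
    exact h a i (fun e => ha (e ▸ hi))

/-- The two-element partition `(a, aᶜ)`. -/
noncomputable def pairP (a : B) : Fin 2 → B := ![a, aᶜ]

lemma pairP_isPart (a : B) : IsPartition (pairP a) := by
  constructor
  · intro i j hij
    fin_cases i <;> fin_cases j <;> simp_all [pairP, inf_comm]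
  · rw [show (Finset.univ : Finset (Fin 2)) = {0, 1} by decide,
      Finset.sup_insert, Finset.sup_singleton]
    show a ⊔ aᶜ = ⊤
    exact sup_compl_eq_top

lemma sup_erase_eq_compl {n : ℕ} {p : Fin n → B} (hp : IsPartition p) (i : Fin n) :
    ((Finset.univ.erase i).sup p) = (p i)ᶜ := by
  symm
  apply compl_unique
  · rw [Finset.sup_inf_distrib_left]
    apply (Finset.sup_eq_bot_iff _ _).2
    intro j hj
    exact hp.1 i j (Finset.ne_of_mem_erase hj).symm
  · rw [← hp.2, ← Finset.sup_insert, Finset.insert_erase (Finset.mem_univ i)]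

lemma vec_congr (Φ : NatFamily B) {n : ℕ} {p q : Fin n → B} (h : p = q)
    (hp : IsPartition p) (hq : IsPartition q) (i : Fin n) :
    Φ.vec n p hp i = Φ.vec n q hq i := by subst h; rfl

/-- Consistency: any partition value equals the corresponding pair value. -/
lemma consistency (Φ : NatFamily B) {n : ℕ} (p : Fin n → B) (hp : IsPartition p) (i : Fin n) :
    Φ.vec n p hp i = Φ.vec 2 (pairP (p i)) (pairP_isPart (p i)) 0 := by
  classical
  set f : Fin n → Fin 2 := fun j => if j = i then 0 else 1 with hf
  have hfil0 : Finset.univ.filter (fun j => f j = (0 : Fin 2)) = {i} := by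
    ext j; simp [hf]
  have hfil1 : Finset.univ.filter (fun j => f j = (1 : Fin 2)) = Finset.univ.erase i := by
    ext j; simp [hf, Fin.ext_iff]
  have hpush : pushPart f p = pairP (p i) := by
    funext k
    fin_cases k
    · show pushPart f p 0 = pairP (p i) 0
      rw [pushPart]
      simp only [hfil0, Finset.sup_singleton]
      rfl
    · show pushPart f p 1 = pairP (p i) 1
      rw [pushPart]
      simp only [hfil1, sup_erase_eq_compl hp]
      rfl
  have hq : IsPartition (pushPart f p) := by rw [hpush]; exact pairP_isPart _
  calc Φ.vec n p hp i = Iact f (Φ.vec n p hp) 0 := by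
        rw [Iact]; rw [hfil0, Finset.sum_singleton]
    _ = Φ.vec 2 (pushPart f p) hq 0 := (congrFun (Φ.natural n 2 f p hp hq) 0).symm
    _ = Φ.vec 2 (pairP (p i)) (pairP_isPart (p i)) 0 := vec_congr Φ hpush hq _ 0

end Aux

/-- Finitely additive probability measures on `B` correspond exactly (via
`Φ.vec n p hp i = μ.m (p i)`) to natural families of probability vectors on
partitions of unity: the restriction map is well-defined and bijective. -/
theorem stmt2 {B : Type*} [BooleanAlgebra B] :
    (∀ μ : FinAddProb B, ∃ Φ : NatFamily B,
      ∀ n (p : Fin n → B) (hp : IsPartition p) (i : Fin n), Φ.vec n p hp i = μ.m (p i)) ∧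
    (∀ Φ : NatFamily B, ∃! μ : FinAddProb B,
      ∀ n (p : Fin n → B) (hp : IsPartition p) (i : Fin n), Φ.vec n p hp i = μ.m (p i)) := by
  constructor
  · -- restriction: a measure gives a natural family
    intro μ
    refine ⟨⟨fun n p hp i => μ.m (p i), fun n p hp i => μ.nonneg _, ?_, ?_⟩, fun n p hp i => rfl⟩
    · intro n p hp
      rw [← sup_sum μ p hp.1, hp.2, μ.top]
    · intro m n f p hp hq
      funext i
      simp only [Iact, pushPart]
      apply sup_sum μ p hp.1
  · -- a natural family gives a unique measure
    intro Φ
    classical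
    set m0 : B → ℝ := fun a => Φ.vec 2 (pairP a) (pairP_isPart a) 0 with hm0
    have hpos : ∀ a, 0 ≤ m0 a := fun a => Φ.nonneg _ _ _ _
    have hsum2 : ∀ (p : Fin 2 → B) (hp : IsPartition p),
        Φ.vec 2 p hp 0 + Φ.vec 2 p hp 1 = 1 := by
      intro p hp
      have := Φ.sum_one 2 p hp
      rwa [Fin.sum_univ_two] at this
    have hle : ∀ a, m0 a ≤ 1 := by
      intro a
      have h := hsum2 (pairP a) (pairP_isPart a)
      have := Φ.nonneg 2 (pairP a) (pairP_isPart a) 1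
      simp only [hm0]; linarith
    have htop : m0 ⊤ = 1 := by
      have h1 : IsPartition (fun _ : Fin 1 => (⊤ : B)) := by
        constructor
        · intro i j hij; exact absurd (Subsingleton.elim i j) hij
        · simp
      have := consistency Φ (fun _ : Fin 1 => (⊤ : B)) h1 0
      have hs := Φ.sum_one 1 _ h1
      rw [Fin.sum_univ_one] at hs
      rw [hm0]; rw [hs] at this; exact this.symm
    have hadd : ∀ a b : B, a ⊓ b = ⊥ → m0 (a ⊔ b) = m0 a + m0 b := by
      intro a b hab
      set q : Fin 3 → B := ![a, b, (a ⊔ b)ᶜ] with hqdef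
      have hq : IsPartition q := by
        constructor
        · intro i j hij
          have h1 : a ⊓ (a ⊔ b)ᶜ = ⊥ := (disjoint_compl_right.mono_left le_sup_left).eq_bot
          have h2 : b ⊓ (a ⊔ b)ᶜ = ⊥ := (disjoint_compl_right.mono_left le_sup_right).eq_bot
          fin_cases i <;> fin_cases j <;>
            simp_all [hqdef, inf_comm]
        · rw [show (Finset.univ : Finset (Fin 3)) = {0, 1, 2} by decide,
            Finset.sup_insert, Finset.sup_insert, Finset.sup_singleton]
          show a ⊔ (b ⊔ (a ⊔ b)ᶜ) = ⊤
          rw [← sup_assoc, sup_compl_eq_top]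
      set f : Fin 3 → Fin 2 := ![0, 0, 1] with hfdef
      have hfilter0 : Finset.univ.filter (fun j => f j = (0 : Fin 2)) = {0, 1} := by decide
      have hfilter1 : Finset.univ.filter (fun j => f j = (1 : Fin 2)) = {2} := by decide
      have hpush : pushPart f q = pairP (a ⊔ b) := by
        funext k
        fin_cases k
        · show pushPart f q 0 = pairP (a ⊔ b) 0
          rw [pushPart]
          simp only [hfilter0, Finset.sup_insert, Finset.sup_singleton]
          rfl
        · show pushPart f q 1 = pairP (a ⊔ b) 1
          rw [pushPart]
          simp only [hfilter1, Finset.sup_singleton]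
          rfl
      have hqq : IsPartition (pushPart f q) := by rw [hpush]; exact pairP_isPart _
      have hnat := congrFun (Φ.natural 3 2 f q hq hqq) 0
      rw [Iact] at hnat
      rw [hfilter0, Finset.sum_insert (by decide), Finset.sum_singleton] at hnat
      have e1 : m0 (a ⊔ b) = Φ.vec 2 (pushPart f q) hqq 0 :=
        (vec_congr Φ hpush hqq (pairP_isPart _) 0).symm
      have e2 : Φ.vec 3 q hq 0 = m0 a := by
        have := consistency Φ q hq 0
        simpa [hqdef, hm0] using this
      have e3 : Φ.vec 3 q hq 1 = m0 b := by
        have := consistency Φ q hq 1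
        simpa [hqdef, hm0] using this
      rw [e1, hnat, e2, e3]
    refine ⟨⟨m0, hpos, hle, htop, hadd⟩, ?_, ?_⟩
    · intro n p hp i
      exact consistency Φ p hp i
    · intro μ' hμ'
      have hm : μ'.m = m0 := by
        funext a
        have := hμ' 2 (pairP a) (pairP_isPart a) 0
        simp only [pairP, Matrix.cons_val_zero] at this
        exact this.symm
      obtain ⟨m', h1, h2, h3, h4⟩ := μ'
      simp only [FinAddProb.mk.injEq]
      exact hm
end

section
/- Conditionals exist for finite-marginal kernels into a profinite limit: let Y be a finite set and (Z_j)_j a cofiltered family of finite sets with limit L, and let p be a probability measure on Y × L (i.e., a compatible family of probability vectors p_j ∈ I(Y × Z_j)). Then there exists a kernel k : Y → (probability measures on L) such that for every j and all (y, z) ∈ Y × Z_j, p_j(y, z) = (∑_{z'} p_j(y, z')) · k(y)_j(z), where k(y)_j denotes the component of k(y) at level j. -/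
/-- Conditionals exist for finite-marginal kernels into a profinite (cofiltered) limit
`L = lim_j Z_j`: given a probability measure `p` on `Y × L`, presented as a compatible
family of probability vectors `p j ∈ I(Y × Z j)`, there is a kernel `k` from `Y` to
probability measures on `L` (a compatible family of probability vectors for each `y`)
with `p j (y, z) = (∑ z', p j (y, z')) * k y j z`. -/
theorem stmt10 {J : Type*} [Preorder J] [IsDirected J (· ≤ ·)] [Nonempty J]
    {Y : Type*} [Fintype Y]
    (Z : J → Type*) [∀ j, Fintype (Z j)] [∀ j, DecidableEq (Z j)]
    (π : ∀ {i j : J}, i ≤ j → Z j → Z i)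
    (πid : ∀ (j : J) (z : Z j), π (le_refl j) z = z)
    (πcomp : ∀ {i j k : J} (hij : i ≤ j) (hjk : j ≤ k) (z : Z k),
      π hij (π hjk z) = π (hij.trans hjk) z)
    (p : ∀ j, Y → Z j → ℝ)
    (pnn : ∀ j y z, 0 ≤ p j y z)
    (psum : ∀ j, ∑ y, ∑ z, p j y z = 1)
    (pcompat : ∀ {i j : J} (h : i ≤ j) (y : Y) (z : Z i),
      p i y z = ∑ z' ∈ Finset.univ.filter (fun z' => π h z' = z), p j y z') :
    ∃ k : Y → ∀ j, Z j → ℝ,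
      (∀ y j z, 0 ≤ k y j z) ∧
      (∀ y j, ∑ z, k y j z = 1) ∧
      (∀ (y : Y) {i j : J} (h : i ≤ j) (z : Z i),
        k y i z = ∑ z' ∈ Finset.univ.filter (fun z' => π h z' = z), k y j z') ∧
      (∀ j y z, p j y z = (∑ z', p j y z') * k y j z) := by
  classical
  -- marginal is independent of j
  have Mle : ∀ {i j : J} (h : i ≤ j) (y : Y), ∑ z, p i y z = ∑ z, p j y z := by
    intro i j h y
    calc ∑ z, p i y z
        = ∑ z : Z i, ∑ z' ∈ Finset.univ.filter (fun z' => π h z' = z), p j y z' := by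
          refine Finset.sum_congr rfl fun z _ => pcompat h y z
      _ = ∑ z, p j y z := Finset.sum_fiberwise _ _ _
  have Mconst : ∀ (i j : J) (y : Y), ∑ z, p i y z = ∑ z, p j y z := by
    intro i j y
    obtain ⟨l, hil, hjl⟩ := directed_of (· ≤ ·) i j
    rw [Mle hil y, Mle hjl y]
  obtain ⟨j0⟩ := ‹Nonempty J›
  set M : Y → ℝ := fun y => ∑ z, p j0 y z with hM
  have Mnn : ∀ y, 0 ≤ M y := fun y => Finset.sum_nonneg fun z _ => pnn j0 y z
  have Mj : ∀ j y, ∑ z, p j y z = M y := fun j y => Mconst j j0 y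
  -- choose y0 with positive marginal
  have hex : ∃ y0, M y0 ≠ 0 := by
    by_contra hc
    push_neg at hc
    have : ∑ y, M y = 1 := psum j0
    simp [hc] at this
  obtain ⟨y0, hy0⟩ := hex
  -- selection
  set sel : Y → Y := fun y => if M y = 0 then y0 else y with hsel
  have selpos : ∀ y, M (sel y) ≠ 0 := by
    intro y
    by_cases h : M y = 0 <;> simp [hsel, h, hy0]
  refine ⟨fun y j z => p j (sel y) z / M (sel y), ?_, ?_, ?_, ?_⟩
  · intro y j z
    exact div_nonneg (pnn _ _ _) (Mnn _)
  · intro y j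
    rw [← Finset.sum_div, Mj j (sel y), div_self (selpos y)]
  · intro y i j h z
    show p i (sel y) z / M (sel y) = _
    rw [pcompat h (sel y) z, Finset.sum_div]
  · intro j y z
    by_cases h : M y = 0
    · have hz : p j y z = 0 := by
        have h0 : ∑ z, p j y z = 0 := by rw [Mj]; exact h
        have := (Finset.sum_eq_zero_iff_of_nonneg fun z _ => pnn j y z).mp h0
        exact this z (Finset.mem_univ z)
      rw [hz, Mj j y, h, zero_mul]
    · have hs : sel y = y := by simp [hsel, h]
      show p j y z = (∑ z', p j y z') * (p j (sel y) z / M (sel y))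
      rw [hs, Mj j y, mul_div_cancel₀ _ h]
end
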